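/- Let (C, b') be a chain complex of modules with a contracting homotopy s (i.e., b's + sb' = 1), and suppose C carries a degreewise action of Z/2 commuting with b' via an involution ϑ. Form the first-quadrant bicomplex Q with Q_{n,m} = C_n, vertical differential D' = ±(1 + (-1)^{m+1}ϑ) and horizontal differential -b'. Then the total complex Tot(Q) is acyclic: H_n(Tot Q) = 0 for all n ≥ 0. -/

import Mathlib

open scoped DirectSum

section

variable {K : Type*} [CommRing K] {C : ℕ → Type*}
  [∀ n, AddCommGroup (C n)] [∀ n, Module K (C n)]

/-- Transport of an element along an equality of degrees. -/
def castL (K : Type*) [CommRing K] {C : ℕ → Type*}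
    [∀ n, AddCommGroup (C n)] [∀ n, Module K (C n)] {p q : ℕ} (h : p = q) :
    C p →ₗ[K] C q := by subst h; exact LinearMap.id

/-- The differential `Tot(Q)_{k+1} → Tot(Q)_k` of the total complex of the bicomplex
`Q_{n,m} = C_n` whose column differentials are `(-1)^{n+1}(1 + (-1)^{m+1}ϑ)` and whose
row differentials are `-b'`. -/
noncomputable def dT (b : ∀ n : ℕ, C (n + 1) →ₗ[K] C n) (θ : ∀ n : ℕ, C n →ₗ[K] C n)
    (k : ℕ) : (⨁ i : Fin (k + 2), C i) →ₗ[K] (⨁ i : Fin (k + 1), C i) :=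
  DirectSum.toModule K (Fin (k + 2)) (⨁ i : Fin (k + 1), C i) (fun n =>
    (if h : (n : ℕ) ≤ k then
      (DirectSum.lof K (Fin (k + 1)) (fun i => C i) ⟨(n : ℕ), by omega⟩).comp
        (((-1 : K) ^ ((n : ℕ) + 1)) •
          (LinearMap.id + ((-1 : K) ^ ((k + 1 - (n : ℕ)) + 1)) • θ (n : ℕ)))
     else 0)
    +
    (if h : 0 < (n : ℕ) then
      (DirectSum.lof K (Fin (k + 1)) (fun i => C i) ⟨(n : ℕ) - 1, by have := n.isLt; omega⟩).comp
        ((-(b ((n : ℕ) - 1))).comp (castL K (show (n : ℕ) = ((n : ℕ) - 1) + 1 by omega)))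
     else 0))

lemma castL_self {p : ℕ} (h : p = p) : castL K (C := C) h = LinearMap.id := rfl

section Aux

variable (b : ∀ n : ℕ, C (n + 1) →ₗ[K] C n) (s : ∀ n : ℕ, C n →ₗ[K] C (n + 1))
  (θ : ∀ n : ℕ, C n →ₗ[K] C n)

/-- The vertical differential of the bicomplex at column `n`, as appearing in `dT b θ k`. -/
noncomputable def Vv (k n : ℕ) : C n →ₗ[K] C n :=
  ((-1 : K) ^ (n + 1)) • (LinearMap.id + ((-1 : K) ^ ((k + 1 - n) + 1)) • θ n)

lemma dT_lof_zero (k : ℕ) (x : C 0) :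
    dT b θ k (DirectSum.lof K (Fin (k + 2)) (fun i => C i) ⟨0, by omega⟩ x)
      = DirectSum.lof K (Fin (k + 1)) (fun i => C i) ⟨0, by omega⟩ (Vv θ k 0 x) := by
  unfold dT Vv
  rw [DirectSum.toModule_lof]
  rw [LinearMap.add_apply]
  rw [dif_pos (show ((⟨0, by omega⟩ : Fin (k + 2)) : ℕ) ≤ k from Nat.zero_le k),
    dif_neg (show ¬ 0 < ((⟨0, by omega⟩ : Fin (k + 2)) : ℕ) from lt_irrefl 0)]
  simp
  rfl

lemma dT_lof_succ (k n : ℕ) (h : n + 1 < k + 2) (x : C (n + 1)) :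
    dT b θ k (DirectSum.lof K (Fin (k + 2)) (fun i => C i) ⟨n + 1, h⟩ x)
      = (if h' : n + 1 ≤ k then
          DirectSum.lof K (Fin (k + 1)) (fun i => C i) ⟨n + 1, by omega⟩ (Vv θ k (n + 1) x)
         else 0)
        + DirectSum.lof K (Fin (k + 1)) (fun i => C i) ⟨n, by omega⟩ (- b n x) := by
  unfold dT Vv
  rw [DirectSum.toModule_lof]
  rw [LinearMap.add_apply]
  rw [dif_pos (show 0 < ((⟨n + 1, h⟩ : Fin (k + 2)) : ℕ) from Nat.succ_pos n)]
  by_cases h' : n + 1 ≤ k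
  · rw [dif_pos h', dif_pos (show ((⟨n + 1, h⟩ : Fin (k + 2)) : ℕ) ≤ k from h')]
    simp [castL_self]
  · rw [dif_neg h', dif_neg (show ¬ ((⟨n + 1, h⟩ : Fin (k + 2)) : ℕ) ≤ k from h')]
    simp [castL_self]

lemma factor_zero (hθ2 : ∀ n, (θ n).comp (θ n) = LinearMap.id) (n : ℕ) (e : K)
    (he : e * e = 1) :
    (LinearMap.id + e • θ n).comp (LinearMap.id + (-e) • θ n) = 0 := by
  simp only [LinearMap.add_comp, LinearMap.comp_add, LinearMap.comp_smul, LinearMap.smul_comp,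
    LinearMap.comp_id, LinearMap.id_comp, hθ2, smul_smul]
  match_scalars
  · linear_combination -he
  · ring

lemma Vv_Vv (hθ2 : ∀ n, (θ n).comp (θ n) = LinearMap.id) (k n : ℕ) (hn : n ≤ k + 1) :
    (Vv θ k n).comp (Vv θ (k + 1) n) = 0 := by
  have h2 : k + 1 + 1 - n = (k + 1 - n) + 1 := by omega
  unfold Vv
  rw [h2, pow_succ (-1 : K) (k + 1 - n + 1), mul_neg_one]
  rw [LinearMap.smul_comp, LinearMap.comp_smul,
    factor_zero θ hθ2 n _ (by rw [← mul_pow]; norm_num), smul_zero, smul_zero]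

lemma b_comp_Vv (hθb : ∀ n, (θ n).comp (b n) = (b n).comp (θ (n + 1))) (k n : ℕ) :
    (b n).comp (Vv θ (k + 1) (n + 1)) = -((Vv θ k n).comp (b n)) := by
  unfold Vv
  rw [show k + 1 + 1 - (n + 1) = k + 1 - n from by omega]
  simp only [LinearMap.comp_smul, LinearMap.smul_comp, LinearMap.comp_add, LinearMap.add_comp,
    LinearMap.comp_id, LinearMap.id_comp, ← hθb]
  rw [pow_succ (-1 : K) (n + 1), mul_neg_one]
  module

/-- One step of the staircase: `V ∘ (-s)`. -/
noncomputable def Wm (k n : ℕ) : C n →ₗ[K] C (n + 1) :=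
  (Vv θ k (n + 1)).comp (-(s n))

/-- The contracting homotopy, restricted to column `n` (with `n + d = k`),
as a map into `Tot_{k+1}`. -/
noncomputable def Rm (k : ℕ) : (d : ℕ) → (n : ℕ) → n + d = k → (C n →ₗ[K] ⨁ i : Fin (k + 2), C i)
  | 0, n, h =>
      (DirectSum.lof K (Fin (k + 2)) (fun i => C i) ⟨n + 1, by omega⟩).comp (-(s n))
  | d + 1, n, h =>
      (DirectSum.lof K (Fin (k + 2)) (fun i => C i) ⟨n + 1, by omega⟩).comp (-(s n))
        - (Rm k d (n + 1) (by omega)).comp (Wm s θ k n)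

lemma Rm_zero (k n : ℕ) (h : n + 0 = k) (x : C n) :
    Rm s θ k 0 n h x
      = DirectSum.lof K (Fin (k + 2)) (fun i => C i) ⟨n + 1, by omega⟩ (-(s n x)) := rfl

lemma Rm_succ (k d n : ℕ) (h : n + (d + 1) = k) (x : C n) :
    Rm s θ k (d + 1) n h x
      = DirectSum.lof K (Fin (k + 2)) (fun i => C i) ⟨n + 1, by omega⟩ (-(s n x))
        - Rm s θ k d (n + 1) (by omega) (Wm s θ k n x) := rfl

/-- The contracting homotopy `Tot_k → Tot_{k+1}`. -/
noncomputable def HTm (k : ℕ) : (⨁ i : Fin (k + 1), C i) →ₗ[K] ⨁ i : Fin (k + 2), C i :=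
  DirectSum.toModule K (Fin (k + 1)) _ fun n =>
    Rm s θ k (k - (n : ℕ)) (n : ℕ) (by have := n.isLt; omega)

lemma HTm_lof (k d n : ℕ) (hd : n + d = k) (hn : n < k + 1) (x : C n) :
    HTm s θ k (DirectSum.lof K (Fin (k + 1)) (fun i => C i) ⟨n, hn⟩ x)
      = Rm s θ k d n hd x := by
  obtain rfl : d = k - n := by omega
  unfold HTm
  rw [DirectSum.toModule_lof]

lemma dd (hb2 : ∀ n, (b n).comp (b (n + 1)) = 0)
    (hθ2 : ∀ n, (θ n).comp (θ n) = LinearMap.id)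
    (hθb : ∀ n, (θ n).comp (b n) = (b n).comp (θ (n + 1))) (k : ℕ) :
    (dT b θ k).comp (dT b θ (k + 1)) = 0 := by
  apply DirectSum.linearMap_ext
  intro i
  refine LinearMap.ext fun x => ?_
  simp only [LinearMap.comp_apply, LinearMap.zero_comp, LinearMap.zero_apply]
  obtain ⟨n, hn⟩ := i
  by_cases hn0 : n = 0
  · subst hn0
    rw [dT_lof_zero b θ (k + 1) x, dT_lof_zero b θ k]
    rw [show Vv θ k 0 (Vv θ (k + 1) 0 x) = 0 from by
      rw [← LinearMap.comp_apply, Vv_Vv θ hθ2 k 0 (by omega)]; rfl]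
    rw [map_zero]
  · obtain ⟨j, rfl⟩ : ∃ j, n = j + 1 := ⟨n - 1, by omega⟩
    rw [dT_lof_succ b θ (k + 1) j hn x, map_add]
    by_cases hj : j + 1 ≤ k + 1
    · rw [dif_pos hj]
      by_cases hj0 : j = 0
      · subst hj0
        rw [dT_lof_succ b θ k 0 (by omega), dT_lof_zero b θ k]
        have h1 : Vv θ k (0 + 1) (Vv θ (k + 1) (0 + 1) x) = 0 := by
          rw [← LinearMap.comp_apply, Vv_Vv θ hθ2 k (0 + 1) (by omega)]; rfl
        have h2 : b 0 (Vv θ (k + 1) (0 + 1) x) = -(Vv θ k 0 (b 0 x)) := by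
          have h := LinearMap.congr_fun (b_comp_Vv b θ hθb k 0) x
          simpa using h
        simp only [h1, map_zero, dite_eq_ite, ite_self, zero_add, h2]
        simp [neg_one_smul]
        exact (congrArg (_ + ·) (map_neg _ _)).trans (add_neg_cancel _)
      · obtain ⟨i, rfl⟩ : ∃ i, j = i + 1 := ⟨j - 1, by omega⟩
        rw [dT_lof_succ b θ k (i + 1) (by omega), dT_lof_succ b θ k i (by omega)]
        have h1 : Vv θ k (i + 1 + 1) (Vv θ (k + 1) (i + 1 + 1) x) = 0 := by
          rw [← LinearMap.comp_apply, Vv_Vv θ hθ2 k (i + 1 + 1) (by omega)]; rfl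
        have h3 : b i (-(b (i + 1) x)) = 0 := by
          have h := LinearMap.congr_fun (hb2 i) x
          simpa using h
        have h2 : b (i + 1) (Vv θ (k + 1) (i + 1 + 1) x) = -(Vv θ k (i + 1) (b (i + 1) x)) := by
          have h := LinearMap.congr_fun (b_comp_Vv b θ hθb k (i + 1)) x
          simpa using h
        simp only [h1, h3, map_zero, neg_zero, dite_eq_ite, ite_self, zero_add, add_zero, h2]
        by_cases hik : i + 1 ≤ k
        · rw [dif_pos hik]
          simp [neg_one_smul]
        · exact absurd (by omega : i + 1 ≤ k) hik
    · rw [dif_neg hj, map_zero, zero_add]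
      obtain rfl : j = k + 1 := by omega
      rw [dT_lof_succ b θ k k (by omega)]
      rw [dif_neg (show ¬ k + 1 ≤ k by omega), zero_add]
      have h3 : b k (-(b (k + 1) x)) = 0 := by
        have h := LinearMap.congr_fun (hb2 k) x
        simpa using h
      simp [h3]

set_option maxHeartbeats 2000000 in
lemma homotopy_aux (hθ2 : ∀ n, (θ n).comp (θ n) = LinearMap.id)
    (hθb : ∀ n, (θ n).comp (b n) = (b n).comp (θ (n + 1)))
    (hcontr : ∀ n, (b (n + 1)).comp (s (n + 1)) + (s n).comp (b n) = LinearMap.id)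
    (hcontr0 : (b 0).comp (s 0) = LinearMap.id) (k d : ℕ) :
    ∀ n (hd : n + d = k + 1) (x : C n),
      dT b θ (k + 1) (Rm s θ (k + 1) d n hd x)
        + HTm s θ k (dT b θ k (DirectSum.lof K (Fin (k + 2)) (fun i => C i) ⟨n, by omega⟩ x))
      = DirectSum.lof K (Fin (k + 2)) (fun i => C i) ⟨n, by omega⟩ x := by
  induction d with
  | zero =>
    intro n hd x
    obtain rfl : n = k + 1 := by omega
    rw [Rm_zero, dT_lof_succ b θ (k + 1) (k + 1) (by omega),
      dif_neg (show ¬ k + 1 + 1 ≤ k + 1 by omega), zero_add,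
      dT_lof_succ b θ k k (by omega), dif_neg (show ¬ k + 1 ≤ k by omega), zero_add,
      HTm_lof s θ k 0 k (by omega) (by omega), Rm_zero]
    simp only [map_neg, neg_neg]
    rw [← map_add]
    have hx := LinearMap.congr_fun (hcontr k) x
    simp only [LinearMap.add_apply, LinearMap.comp_apply, LinearMap.id_apply] at hx
    rw [hx]
  | succ d ih =>
    intro n hd x
    by_cases hn0 : n = 0
    · subst hn0
      have hpf0 : 0 + d = k := by omega
      rw [Rm_succ, map_sub, dT_lof_succ b θ (k + 1) 0 (by omega),
        dif_pos (show 0 + 1 ≤ k + 1 by omega)]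
      rw [show Vv θ (k + 1) (0 + 1) (-(s 0 x)) = Wm s θ (k + 1) 0 x from rfl]
      have H1 := ih (0 + 1) (by omega) (Wm s θ (k + 1) 0 x)
      rw [dT_lof_succ b θ k 0 (by omega)] at H1
      have hV0 : Vv θ k (0 + 1) (Wm s θ (k + 1) 0 x) = 0 := by
        have h0 : Vv θ k (0 + 1) (Vv θ (k + 1) (0 + 1) (-(s 0 x))) = 0 := by
          rw [← LinearMap.comp_apply, Vv_Vv θ hθ2 k (0 + 1) (by omega)]; rfl
        exact h0
      simp only [hV0, map_zero, dite_eq_ite, ite_self, zero_add] at H1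
      rw [HTm_lof s θ k d 0 hpf0 (by omega)] at H1
      rw [eq_sub_of_add_eq H1]
      rw [dT_lof_zero b θ k x, HTm_lof s θ k d 0 hpf0 (by omega)]
      have hx0 := LinearMap.congr_fun hcontr0 x
      simp only [LinearMap.comp_apply, LinearMap.id_apply] at hx0
      have hC0 : b 0 (Wm s θ (k + 1) 0 x) = Vv θ k 0 x := by
        have h := LinearMap.congr_fun (b_comp_Vv b θ hθb k 0) (-(s 0 x))
        simp only [LinearMap.comp_apply, LinearMap.neg_apply] at h
        calc b 0 (Wm s θ (k + 1) 0 x)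
            = b 0 (Vv θ (k + 1) (0 + 1) (-(s 0 x))) := rfl
          _ = -(Vv θ k 0 (b 0 (-(s 0 x)))) := h
          _ = Vv θ k 0 (b 0 (s 0 x)) := by simp only [map_neg, neg_neg]
          _ = Vv θ k 0 x := by rw [hx0]
      have hRR : Rm s θ k d 0 hpf0 (-(b 0 (Wm s θ (k + 1) 0 x)))
          = -(Rm s θ k d 0 hpf0 (Vv θ k 0 x)) := by
        rw [show -(b 0 (Wm s θ (k + 1) 0 x)) = -(Vv θ k 0 x) from by rw [hC0], map_neg]
      rw [hRR]
      simp only [map_neg, neg_neg]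
      rw [hx0]
      abel
    · obtain ⟨j, rfl⟩ : ∃ j, n = j + 1 := ⟨n - 1, by omega⟩
      have hpf : j + 1 + d = k := by omega
      rw [Rm_succ, map_sub, dT_lof_succ b θ (k + 1) (j + 1) (by omega),
        dif_pos (show j + 1 + 1 ≤ k + 1 by omega)]
      rw [show Vv θ (k + 1) (j + 1 + 1) (-(s (j + 1) x)) = Wm s θ (k + 1) (j + 1) x from rfl]
      have H1 := ih (j + 1 + 1) (by omega) (Wm s θ (k + 1) (j + 1) x)
      rw [dT_lof_succ b θ k (j + 1) (by omega)] at H1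
      have hV0 : Vv θ k (j + 1 + 1) (Wm s θ (k + 1) (j + 1) x) = 0 := by
        have h0 : Vv θ k (j + 1 + 1) (Vv θ (k + 1) (j + 1 + 1) (-(s (j + 1) x))) = 0 := by
          rw [← LinearMap.comp_apply, Vv_Vv θ hθ2 k (j + 1 + 1) (by omega)]; rfl
        exact h0
      simp only [hV0, map_zero, dite_eq_ite, ite_self, zero_add] at H1
      rw [HTm_lof s θ k d (j + 1) hpf (by omega)] at H1
      rw [eq_sub_of_add_eq H1]
      rw [dT_lof_succ b θ k j (by omega), dif_pos (show j + 1 ≤ k by omega)]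
      rw [map_add (HTm s θ k)]
      rw [HTm_lof s θ k d (j + 1) hpf (by omega),
        HTm_lof s θ k (d + 1) j (by omega) (by omega), Rm_succ]
      have hsx := LinearMap.congr_fun (hcontr j) x
      simp only [LinearMap.add_apply, LinearMap.comp_apply, LinearMap.id_apply] at hsx
      have hbW : b (j + 1) (Wm s θ (k + 1) (j + 1) x)
          = Vv θ k (j + 1) (b (j + 1) (s (j + 1) x)) := by
        have h := LinearMap.congr_fun (b_comp_Vv b θ hθb k (j + 1)) (-(s (j + 1) x))
        simp only [LinearMap.comp_apply, LinearMap.neg_apply] at h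
        calc b (j + 1) (Wm s θ (k + 1) (j + 1) x)
            = b (j + 1) (Vv θ (k + 1) (j + 1 + 1) (-(s (j + 1) x))) := rfl
          _ = -(Vv θ k (j + 1) (b (j + 1) (-(s (j + 1) x)))) := h
          _ = Vv θ k (j + 1) (b (j + 1) (s (j + 1) x)) := by simp only [map_neg, neg_neg]
      have hWj : Wm s θ k j (-(b j x)) = Vv θ k (j + 1) (s j (b j x)) := by
        calc Wm s θ k j (-(b j x)) = Vv θ k (j + 1) (-(s j (-(b j x)))) := rfl
          _ = Vv θ k (j + 1) (s j (b j x)) := by simp only [map_neg, neg_neg]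
      have hA : Rm s θ k d (j + 1) hpf (-(b (j + 1) (Wm s θ (k + 1) (j + 1) x)))
            + Rm s θ k d (j + 1) hpf (Vv θ k (j + 1) x)
          = Rm s θ k d (j + 1) hpf (Wm s θ k j (-(b j x))) := by
        rw [← map_add, hWj]
        congr 1
        rw [hbW, ← map_neg, ← map_add]
        congr 1
        rw [eq_sub_of_add_eq hsx]
        abel
      rw [← hA]
      rw [show -(b (j + 1) (-(s (j + 1) x))) = b (j + 1) (s (j + 1) x) from by
        simp only [map_neg, neg_neg]]
      rw [show -(s j (-(b j x))) = s j (b j x) from by simp only [map_neg, neg_neg]]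
      conv_rhs => rw [← hsx, map_add]
      abel

lemma homotopy_id (hθ2 : ∀ n, (θ n).comp (θ n) = LinearMap.id)
    (hθb : ∀ n, (θ n).comp (b n) = (b n).comp (θ (n + 1)))
    (hcontr : ∀ n, (b (n + 1)).comp (s (n + 1)) + (s n).comp (b n) = LinearMap.id)
    (hcontr0 : (b 0).comp (s 0) = LinearMap.id) (k : ℕ) (y : ⨁ i : Fin (k + 2), C i) :
    dT b θ (k + 1) (HTm s θ (k + 1) y) + HTm s θ k (dT b θ k y) = y := by
  suffices h : (dT b θ (k + 1)).comp (HTm s θ (k + 1)) + (HTm s θ k).comp (dT b θ k)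
      = LinearMap.id by
    have := LinearMap.congr_fun h y
    simpa using this
  apply DirectSum.linearMap_ext
  intro i
  refine LinearMap.ext fun x => ?_
  obtain ⟨n, hn⟩ := i
  simp only [LinearMap.comp_apply, LinearMap.add_apply, LinearMap.id_apply]
  rw [HTm_lof s θ (k + 1) (k + 1 - n) n (by omega) hn]
  exact homotopy_aux b s θ hθ2 hθb hcontr hcontr0 k (k + 1 - n) n (by omega) x

lemma dT_HT0 (hcontr0 : (b 0).comp (s 0) = LinearMap.id) (y : ⨁ i : Fin 1, C i) :
    dT b θ 0 (HTm s θ 0 y) = y := by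
  suffices h : (dT b θ 0).comp (HTm s θ 0) = LinearMap.id by
    have := LinearMap.congr_fun h y
    simpa using this
  apply DirectSum.linearMap_ext
  intro i
  refine LinearMap.ext fun x => ?_
  obtain ⟨n, hn⟩ := i
  obtain rfl : n = 0 := by omega
  simp only [LinearMap.comp_apply, LinearMap.id_apply]
  rw [HTm_lof s θ 0 0 0 (by omega) (by omega), Rm_zero,
    dT_lof_succ b θ 0 0 (by omega), dif_neg (show ¬ 0 + 1 ≤ 0 by omega)]
  have hx0 := LinearMap.congr_fun hcontr0 x
  simp only [LinearMap.comp_apply, LinearMap.id_apply] at hx0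
  refine (zero_add _).trans ?_
  simp only [map_neg, neg_neg]
  rw [hx0]

end Aux

/-- If `(C, b')` is a chain complex with a contracting homotopy `s`
(`b's + sb' = 1`) and a degreewise involution `ϑ` commuting with `b'`, then the total
complex of the first-quadrant bicomplex `Q` with `Q_{n,m} = C_n`, vertical differentials
`±(1 + (-1)^{m+1}ϑ)` and horizontal differentials `-b'` is acyclic:  `H_n(Tot Q) = 0`
for all `n ≥ 0` (exactness in every positive degree, and surjectivity of
`Tot(Q)_1 → Tot(Q)_0` in degree zero). -/
theorem stmt15 (b : ∀ n : ℕ, C (n + 1) →ₗ[K] C n) (s : ∀ n : ℕ, C n →ₗ[K] C (n + 1))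
    (θ : ∀ n : ℕ, C n →ₗ[K] C n)
    (hb2 : ∀ n, (b n).comp (b (n + 1)) = 0)
    (hθ2 : ∀ n, (θ n).comp (θ n) = LinearMap.id)
    (hθb : ∀ n, (θ n).comp (b n) = (b n).comp (θ (n + 1)))
    (hcontr : ∀ n, (b (n + 1)).comp (s (n + 1)) + (s n).comp (b n) = LinearMap.id)
    (hcontr0 : (b 0).comp (s 0) = LinearMap.id) :
    Function.Surjective (dT b θ 0) ∧
    ∀ k : ℕ, Function.Exact (dT b θ (k + 1)) (dT b θ k) := by
  constructor
  · intro y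
    exact ⟨HTm s θ 0 y, dT_HT0 b s θ hcontr0 y⟩
  · intro k y
    constructor
    · intro hy
      refine ⟨HTm s θ (k + 1) y, ?_⟩
      have h := homotopy_id b s θ hθ2 hθb hcontr hcontr0 k y
      rw [hy, map_zero, add_zero] at h
      exact h
    · rintro ⟨x, rfl⟩
      have h := LinearMap.congr_fun (dd b θ hb2 hθ2 hθb k) x
      simpa using h


end
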